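/- If for some positive integer k the odd density of p(·,k) is greater than 2/3 (i.e., lim_{N→∞} #{n ≤ N : p(n,k) is odd}/N > 2/3), then the density of even values of p(·,k+1) is greater than 1/3 (i.e., lim_{N→∞} #{n ≤ N : p(n,k+1) is even}/N > 1/3). -/

import Mathlib

/-- `p n k` is the number of partitions of `n` into parts each of size at most `k`
(with `p 0 k = 1`). -/
def p (n k : ℕ) : ℕ :=
  (Finset.univ.filter (fun P : n.Partition => ∀ i ∈ P.parts, i ≤ k)).card

open Finset Filter

lemma p_rec (n k : ℕ) :
    p (n + (k + 1)) (k + 1) = p (n + (k + 1)) k + p n (k + 1) := by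
  classical
  set A : Finset ((n + (k+1)).Partition) :=
    Finset.univ.filter (fun P => ∀ i ∈ P.parts, i ≤ k + 1) with hA
  have hsplit := Finset.card_filter_add_card_filter_not
    (s := A) (p := fun P => (k+1) ∈ P.parts)
  have h1 : (A.filter (fun P => ¬ (k+1) ∈ P.parts)).card = p (n + (k + 1)) k := by
    rw [hA, Finset.filter_filter, p]
    congr 1
    apply Finset.filter_congr
    intro P _
    constructor
    · rintro ⟨hle, hnot⟩ i hi
      rcases Nat.lt_or_ge i (k+1) with h | h
      · omega
      · exfalso; apply hnot
        have hle' := hle i hi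
        have : i = k + 1 := by omega
        exact this ▸ hi
    · intro h
      refine ⟨fun i hi => le_trans (h i hi) (by omega), fun hmem => by have := h _ hmem; omega⟩
  have h2 : (A.filter (fun P => (k+1) ∈ P.parts)).card = p n (k + 1) := by
    rw [p]
    apply Finset.card_bij (fun P hP => Nat.Partition.mk (P.parts.erase (k+1))
      (fun hi => P.parts_pos (Multiset.mem_of_mem_erase hi))
      (by
        have hmem : (k+1) ∈ P.parts := (Finset.mem_filter.mp hP).2
        have hce := Multiset.cons_erase hmem
        have hsum : P.parts.sum = n + (k+1) := P.parts_sum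
        have h' : (k+1) + (P.parts.erase (k+1)).sum = n + (k+1) := by
          rw [← Multiset.sum_cons, hce]; exact hsum
        omega))
    · intro P hP
      simp only [Finset.mem_filter, Finset.mem_univ, true_and]
      intro i hi
      have hP' : P ∈ A ∧ (k+1) ∈ P.parts := by simpa using hP
      exact hP'.1 |> fun h => by
        simp only [hA, Finset.mem_filter] at h
        exact h.2 i (Multiset.mem_of_mem_erase hi)
    · intro P hP Q hQ hEq
      have hPk : (k+1) ∈ P.parts := by simp [hA] at hP; exact hP.2
      have hQk : (k+1) ∈ Q.parts := by simp [hA] at hQ; exact hQ.2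
      ext1
      have : P.parts.erase (k+1) = Q.parts.erase (k+1) := congrArg Nat.Partition.parts hEq
      rw [← Multiset.cons_erase hPk, ← Multiset.cons_erase hQk, this]
    · intro Q hQ
      simp only [Finset.mem_filter, Finset.mem_univ, true_and] at hQ
      refine ⟨Nat.Partition.mk ((k+1) ::ₘ Q.parts) ?_ ?_, ?_, ?_⟩
      · intro i hi
        rcases Multiset.mem_cons.mp hi with h | h
        · omega
        · exact Q.parts_pos h
      · simp [Multiset.sum_cons, Q.parts_sum, Nat.add_comm]
      · simp only [hA, Finset.mem_filter, Finset.mem_univ, true_and]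
        constructor
        · intro i hi
          rcases Multiset.mem_cons.mp hi with h | h
          · omega
          · exact hQ i h
        · exact Multiset.mem_cons_self _ _
      · ext1
        simp [Multiset.erase_cons_head]
  have h0 : p (n + (k+1)) (k+1) = A.card := rfl
  omega

lemma p_one (n : ℕ) : p n 1 = 1 := by
  classical
  rw [p, Finset.card_eq_one]
  refine ⟨⟨Multiset.replicate n 1, ?_, by simp⟩, ?_⟩
  · intro i hi
    rw [Multiset.eq_of_mem_replicate hi]; norm_num
  · rw [Finset.eq_singleton_iff_unique_mem]
    constructor
    · simp only [Finset.mem_filter, Finset.mem_univ, true_and]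
      intro i hi
      rw [Multiset.eq_of_mem_replicate hi]
    · intro P hP
      simp only [Finset.mem_filter, Finset.mem_univ, true_and] at hP
      ext1
      have hall : ∀ i ∈ P.parts, i = 1 := fun i hi =>
        le_antisymm (hP i hi) (P.parts_pos hi)
      have := Multiset.eq_replicate_card.mpr hall
      rw [this]
      simp only []
      congr 1
      have hsum := P.parts_sum
      rw [Multiset.eq_replicate_card.mpr hall] at hsum
      simpa using hsum
/-- parity of `p n k` as an element of `ZMod 2` -/
noncomputable def q (k n : ℕ) : ZMod 2 := (p n k : ZMod 2)

lemma q_rec (n k : ℕ) : q (k+1) (n + (k+1)) = q k (n + (k+1)) + q (k+1) n := by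
  unfold q
  rw [← Nat.cast_add, ← p_rec]

lemma q_iter (k : ℕ) : ∀ m n, q (k+1) (n + m * (k+1)) =
    q (k+1) n + ∑ i ∈ Finset.range m, q k (n + (i+1) * (k+1)) := by
  intro m
  induction m with
  | zero => simp
  | succ m ih =>
    intro n
    have h1 : n + (m+1) * (k+1) = (n + m * (k+1)) + (k+1) := by ring
    rw [h1, q_rec, ih, Finset.sum_range_succ]
    have h2 : n + m * (k+1) + (k+1) = n + (m+1) * (k+1) := by ring
    rw [h2]
    ring

lemma period_mul {f : ℕ → ZMod 2} {T : ℕ} (h : ∀ n, f (n + T) = f n) :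
    ∀ j n, f (n + j * T) = f n := by
  intro j
  induction j with
  | zero => simp
  | succ j ih =>
    intro n
    have : n + (j+1) * T = (n + j * T) + T := by ring
    rw [this, h, ih]

lemma parity_periodic : ∀ k, 0 < k → ∃ T, 0 < T ∧ ∀ n, q k (n + T) = q k n := by
  intro k hk
  induction k with
  | zero => omega
  | succ k ih =>
    rcases Nat.eq_zero_or_pos k with rfl | hk'
    · exact ⟨1, one_pos, fun n => by unfold q; rw [p_one, p_one]⟩
    · obtain ⟨T, hT, hper⟩ := ih hk'
      refine ⟨2 * T * (k+1), by positivity, fun n => ?_⟩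
      have h1 : n + 2 * T * (k+1) = n + (2*T) * (k+1) := by ring
      rw [h1, q_iter]
      have h2 : ∑ i ∈ Finset.range (2*T), q k (n + (i+1) * (k+1)) = 0 := by
        have h3 : 2 * T = T + T := by ring
        rw [h3, Finset.sum_range_add]
        have h4 : ∀ i, q k (n + (T + i + 1) * (k+1)) = q k (n + (i+1) * (k+1)) := by
          intro i
          have h5 : n + (T + i + 1) * (k+1) = (n + (i+1)*(k+1)) + (k+1) * T := by ring
          rw [h5, period_mul hper (k+1)]
        rw [Finset.sum_congr rfl (fun i _ => h4 i)]
        rw [← two_mul]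
        have : (2 : ZMod 2) = 0 := rfl
        rw [this, zero_mul]
      rw [h2, add_zero]

lemma period_mul_iff {b : ℕ → Prop} {T : ℕ} (h : ∀ n, b (n + T) ↔ b n) :
    ∀ j n, b (n + j * T) ↔ b n := by
  intro j
  induction j with
  | zero => simp
  | succ j ih =>
    intro n
    have : n + (j+1) * T = (n + j * T) + T := by ring
    rw [this, h, ih]

lemma count_add (b : ℕ → Prop) [DecidablePred b] (a s : ℕ) :
    ((range (a + s)).filter b).card =
      ((range a).filter b).card + ((range s).filter (fun i => b (a + i))).card := by
  classical
  rw [Finset.range_add_eq_union, Finset.filter_union,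
    Finset.card_union_of_disjoint, Finset.filter_map]
  · rw [Finset.card_map]
    rfl
  · refine Finset.disjoint_filter_filter ?_
    rw [Finset.disjoint_left]
    intro x hx hx'
    simp only [Finset.mem_range] at hx
    simp only [Finset.mem_map, addLeftEmbedding_apply] at hx'
    omega

lemma count_mul (b : ℕ → Prop) [DecidablePred b] (T : ℕ)
    (hper : ∀ n, b (n + T) ↔ b n) (m : ℕ) :
    ((range (m * T)).filter b).card = m * ((range T).filter b).card := by
  induction m with
  | zero => simp
  | succ m ih =>
    have : (m + 1) * T = m * T + T := by ring
    rw [this, count_add, ih]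
    have : ((range T).filter (fun i => b (m * T + i))).card
        = ((range T).filter b).card := by
      congr 1
      apply Finset.filter_congr
      intro i _
      have : m * T + i = i + m * T := by ring
      rw [this]
      simp [period_mul_iff hper m i]
    rw [this]
    ring

lemma density_of_periodic (b : ℕ → Prop) [DecidablePred b] (T : ℕ) (hT : 0 < T)
    (hper : ∀ n, b (n + T) ↔ b n) :
    Filter.Tendsto (fun N : ℕ => (((Finset.range (N+1)).filter b).card : ℝ) / N)
      Filter.atTop (nhds ((((Finset.range T).filter b).card : ℝ) / T)) := by
  classical
  set c : ℕ := ((Finset.range T).filter b).card with hc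
  set C : ℕ → ℕ := fun N => ((Finset.range N).filter b).card with hC
  have hcT : c ≤ T := le_trans (Finset.card_filter_le _ _) (by simp)
  have hmono : Monotone C := by
    intro a b' hab
    exact Finset.card_le_card (Finset.filter_subset_filter _
      (Finset.range_subset_range.mpr hab))
  have hTpos : (0:ℝ) < T := by exact_mod_cast hT
  have hbound : ∀ N : ℕ, ((N / T : ℕ) * c ≤ C N ∧ C N ≤ (N / T : ℕ) * c + T)
      ∧ (N / T : ℕ) * T ≤ N ∧ N < (N / T : ℕ) * T + T := by
    intro N
    set m := N / T with hm
    have h3 : m * T ≤ N := Nat.div_mul_le_self N T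
    have h4 : N < m * T + T := by
      have h := Nat.div_add_mod N T
      have h' := Nat.mod_lt N hT
      calc N = T * m + N % T := h.symm
        _ < T * m + T := by omega
        _ = m * T + T := by ring
    refine ⟨⟨?_, ?_⟩, h3, h4⟩
    · calc m * c = C (m * T) := (count_mul b T hper m).symm
        _ ≤ C N := hmono h3
    · calc C N ≤ C (m * T + T) := hmono (le_of_lt h4)
        _ = C ((m+1) * T) := by ring_nf
        _ = (m+1) * c := count_mul b T hper (m+1)
        _ ≤ m * c + T := by nlinarith
  have key : Filter.Tendsto (fun N : ℕ => (C N : ℝ) / N) Filter.atTop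
      (nhds ((c : ℝ) / T)) := by
    apply tendsto_of_tendsto_of_tendsto_of_le_of_le'
      (g := fun N : ℕ => (c : ℝ)/T - T/N) (h := fun N : ℕ => (c : ℝ)/T + T/N)
    · simpa using (tendsto_const_nhds (x := (c:ℝ)/T)).sub
        (tendsto_const_div_atTop_nhds_zero_nat (T:ℝ))
    · simpa using (tendsto_const_nhds (x := (c:ℝ)/T)).add
        (tendsto_const_div_atTop_nhds_zero_nat (T:ℝ))
    · filter_upwards [Filter.eventually_ge_atTop 1] with N hN
      have hNpos : (0:ℝ) < N := by exact_mod_cast hN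
      obtain ⟨⟨h1, h2⟩, h3, h4⟩ := hbound N
      have h1' : ((N / T : ℕ) : ℝ) * c ≤ C N := by exact_mod_cast h1
      have h4' : (N : ℝ) < ((N / T : ℕ) : ℝ) * T + T := by exact_mod_cast h4
      have hcT' : (c : ℝ) ≤ T := by exact_mod_cast hcT
      have hc0 : (0:ℝ) ≤ c := by positivity
      have hm0 : (0:ℝ) ≤ ((N / T : ℕ) : ℝ) := by positivity
      have hkey : (c : ℝ) * N ≤ (C N) * T + T * T := by nlinarith
      rw [sub_le_iff_le_add, div_add_div _ _ (ne_of_gt hNpos) (ne_of_gt hNpos),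
        div_le_div_iff₀ hTpos (by positivity)]
      nlinarith
    · filter_upwards [Filter.eventually_ge_atTop 1] with N hN
      have hNpos : (0:ℝ) < N := by exact_mod_cast hN
      obtain ⟨⟨h1, h2⟩, h3, h4⟩ := hbound N
      have h2' : (C N : ℝ) ≤ ((N / T : ℕ) : ℝ) * c + T := by exact_mod_cast h2
      have h3' : ((N / T : ℕ) : ℝ) * T ≤ N := by exact_mod_cast h3
      have hcT' : (c : ℝ) ≤ T := by exact_mod_cast hcT
      have hc0 : (0:ℝ) ≤ c := by positivity
      have hm0 : (0:ℝ) ≤ ((N / T : ℕ) : ℝ) := by positivity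
      have hkey : (C N : ℝ) * T ≤ c * N + T * T := by nlinarith
      rw [div_add_div _ _ (ne_of_gt hTpos) (ne_of_gt hNpos),
        div_le_div_iff₀ hNpos (by positivity)]
      nlinarith
  have key2 : Filter.Tendsto (fun N : ℕ => (C (N+1) : ℝ) / ((N:ℝ)+1)) Filter.atTop
      (nhds ((c : ℝ) / T)) := by
    have := key.comp (Filter.tendsto_add_atTop_nat 1)
    simpa [Function.comp_def] using this
  have key3 : Filter.Tendsto (fun N : ℕ => ((N:ℝ)+1) / N) Filter.atTop (nhds 1) := by
    have base : Filter.Tendsto (fun N : ℕ => 1 + (1:ℝ)/N) Filter.atTop (nhds 1) := by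
      simpa using (tendsto_const_nhds (x := (1:ℝ))).add
        (tendsto_const_div_atTop_nhds_zero_nat 1)
    apply base.congr'
    filter_upwards [Filter.eventually_ge_atTop 1] with N hN
    have hNpos : (0:ℝ) < N := by exact_mod_cast hN
    field_simp
  have final := key2.mul key3
  rw [mul_one] at final
  apply final.congr
  intro N
  rcases Nat.eq_zero_or_pos N with rfl | hN
  · simp
  · have hNpos : (0:ℝ) < N := by exact_mod_cast hN
    field_simp
    rfl
lemma count_ineq (k N : ℕ) :
    ((Finset.range (N+1)).filter (fun n => Odd (p n k))).card ≤
      2 * ((Finset.range (N+1)).filter (fun n => Even (p n (k+1)))).card + (k+1) := by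
  classical
  set O := (range (N+1)).filter (fun n => Odd (p n k)) with hO
  set E := (range (N+1)).filter (fun n => Even (p n (k+1))) with hE
  set O' := O.filter (fun n => k+1 ≤ n) with hO'
  have hcard1 : O.card ≤ O'.card + (k+1) := by
    have hsub : O ⊆ O' ∪ range (k+1) := by
      intro n hn
      rcases Nat.lt_or_ge n (k+1) with h | h
      · exact Finset.mem_union_right _ (Finset.mem_range.mpr h)
      · exact Finset.mem_union_left _ (Finset.mem_filter.mpr ⟨hn, h⟩)
    calc O.card ≤ (O' ∪ range (k+1)).card := Finset.card_le_card hsub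
      _ ≤ O'.card + (range (k+1)).card := Finset.card_union_le _ _
      _ = O'.card + (k+1) := by rw [Finset.card_range]
  set f : ℕ → ℕ := fun n => if Even (p n (k+1)) then n else n - (k+1) with hf
  have hmaps : ∀ n ∈ O', f n ∈ E := by
    intro n hn
    simp only [hO', hO, Finset.mem_filter, Finset.mem_range] at hn
    obtain ⟨⟨hnN, hodd⟩, hnk⟩ := hn
    by_cases he : Even (p n (k+1))
    · simp only [hE, Finset.mem_filter, Finset.mem_range, hf]
      rw [if_pos he]
      exact ⟨hnN, he⟩
    · simp only [hE, Finset.mem_filter, Finset.mem_range, hf]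
      rw [if_neg he]
      have heq : n = (n - (k+1)) + (k+1) := by omega
      have hrec := p_rec (n - (k+1)) k
      rw [← heq] at hrec
      constructor
      · omega
      · rw [Nat.even_iff]
        rw [Nat.odd_iff] at hodd
        rw [Nat.even_iff] at he
        omega
  have hfib : ∀ m ∈ E, (O'.filter (fun n => f n = m)).card ≤ 2 := by
    intro m _
    have hsub : O'.filter (fun n => f n = m) ⊆ {m, m + (k+1)} := by
      intro n hn
      simp only [Finset.mem_filter, hO', hO, Finset.mem_range] at hn
      obtain ⟨⟨_, hnk⟩, hfn⟩ := hn
      simp only [hf] at hfn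
      simp only [Finset.mem_insert, Finset.mem_singleton]
      split_ifs at hfn with h
      · left; omega
      · right; omega
    calc (O'.filter (fun n => f n = m)).card ≤ ({m, m + (k+1)} : Finset ℕ).card :=
        Finset.card_le_card hsub
      _ ≤ 2 := Finset.card_insert_le _ _ |>.trans (by simp)
  have hO'E : O'.card ≤ 2 * E.card :=
    Finset.card_le_mul_card_image_of_maps_to hmaps 2 hfib
  omega

theorem stmt_7 (k : ℕ) (hk : 0 < k) (d : ℝ)
    (hd : Filter.Tendsto
      (fun N : ℕ =>
        (((Finset.range (N + 1)).filter (fun n => Odd (p n k))).card : ℝ) / N)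
      Filter.atTop (nhds d))
    (hgt : 2 / 3 < d) :
    ∃ d' : ℝ, 1 / 3 < d' ∧
      Filter.Tendsto
        (fun N : ℕ =>
          (((Finset.range (N + 1)).filter
            (fun n => Even (p n (k + 1)))).card : ℝ) / N)
        Filter.atTop (nhds d') := by
  obtain ⟨T, hT, hq⟩ := parity_periodic (k+1) (by omega)
  have hcast : ∀ m : ℕ, Even m ↔ (m : ZMod 2) = 0 := by
    intro m
    rw [ZMod.natCast_eq_zero_iff]
    exact even_iff_two_dvd
  have hper : ∀ n, Even (p (n + T) (k+1)) ↔ Even (p n (k+1)) := by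
    intro n
    rw [hcast, hcast]
    have := hq n
    unfold q at this
    rw [this]
  have hEt := density_of_periodic (fun n => Even (p n (k+1))) T hT hper
  set c : ℕ := ((Finset.range T).filter (fun n => Even (p n (k+1)))).card with hcdef
  refine ⟨(c:ℝ)/T, ?_, hEt⟩
  have h2d : d ≤ 2 * ((c:ℝ)/T) + 0 := by
    apply le_of_tendsto_of_tendsto hd ((hEt.const_mul 2).add
      (tendsto_const_div_atTop_nhds_zero_nat ((k:ℝ)+1)))
    filter_upwards [Filter.eventually_ge_atTop 1] with N hN
    have hNpos : (0:ℝ) < N := by exact_mod_cast hN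
    have hci := count_ineq k N
    have hci' : ((((Finset.range (N + 1)).filter (fun n => Odd (p n k))).card : ℝ)) ≤
        2 * (((Finset.range (N + 1)).filter (fun n => Even (p n (k+1)))).card : ℝ)
          + ((k:ℝ)+1) := by exact_mod_cast hci
    rw [← mul_div_assoc, ← add_div]
    gcongr
  have hTpos : (0:ℝ) < T := by exact_mod_cast hT
  have hd2 : (c:ℝ)/T ≥ d/2 := by linarith
  linarith
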